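/- Non-uniform smoothness between two iterations of stochastic softmax PG: fix θ ∈ ℝ^K and a sampled action a ∈ [K], set η := (1/12)·‖d(π_θᵀ r)/dθ‖₂ and θ' := θ + η·g_a(θ). Then |(π_{θ'} − π_θ)ᵀ r − ⟨d(π_θᵀ r)/dθ, θ' − θ⟩| ≤ 3·‖d(π_θᵀ r)/dθ‖₂·‖θ' − θ‖₂². -/

import Mathlib

open Finset Real Filter

/-- Softmax policy: `π_θ(a) = exp(θ(a)) / Σ_{a'} exp(θ(a'))`. -/
noncomputable def softmax {K : ℕ} (θ : Fin K → ℝ) (a : Fin K) : ℝ :=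
  Real.exp (θ a) / ∑ a', Real.exp (θ a')

/-- Expected reward `π_θᵀ r`. -/
noncomputable def expReward {K : ℕ} (r θ : Fin K → ℝ) : ℝ :=
  ∑ a, softmax θ a * r a

/-- Policy gradient component `(d π_θᵀ r / dθ)(a) = π_θ(a)·(r(a) − π_θᵀ r)`. -/
noncomputable def pgrad {K : ℕ} (r θ : Fin K → ℝ) (a : Fin K) : ℝ :=
  softmax θ a * (r a - expReward r θ)

/-- Euclidean norm of the policy gradient. -/
noncomputable def pgradNorm {K : ℕ} (r θ : Fin K → ℝ) : ℝ :=
  Real.sqrt (∑ a, pgrad r θ a ^ 2)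

section Aux
variable {K : ℕ}

lemma sumexp_pos (hK : 0 < K) (θ : Fin K → ℝ) : 0 < ∑ a', Real.exp (θ a') := by
  haveI : Nonempty (Fin K) := Fin.pos_iff_nonempty.1 hK
  exact Finset.sum_pos (fun i _ => Real.exp_pos _) Finset.univ_nonempty

lemma softmax_pos (hK : 0 < K) (θ : Fin K → ℝ) (i : Fin K) : 0 < softmax θ i :=
  div_pos (Real.exp_pos _) (sumexp_pos hK θ)

lemma softmax_sum_one (hK : 0 < K) (θ : Fin K → ℝ) : ∑ i, softmax θ i = 1 := by
  unfold softmax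
  rw [← Finset.sum_div, div_self (sumexp_pos hK θ).ne']

lemma softmax_le_one (hK : 0 < K) (θ : Fin K → ℝ) (i : Fin K) : softmax θ i ≤ 1 := by
  rw [← softmax_sum_one hK θ]
  exact Finset.single_le_sum (fun j _ => (softmax_pos hK θ j).le) (Finset.mem_univ i)

lemma hasDerivAt_softmax (hK : 0 < K) (θ δ : Fin K → ℝ) (i : Fin K) (t : ℝ) :
    HasDerivAt (fun s => softmax (fun j => θ j + s * δ j) i)
      (softmax (fun j => θ j + t * δ j) i *
        (δ i - ∑ j, softmax (fun j' => θ j' + t * δ j') j * δ j)) t := by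
  have hN : ∀ j : Fin K, HasDerivAt (fun s => Real.exp (θ j + s * δ j))
      (Real.exp (θ j + t * δ j) * δ j) t := fun j =>
    ((hasDerivAt_mul_const (δ j)).const_add (θ j)).exp
  have hS : HasDerivAt (fun s => ∑ j, Real.exp (θ j + s * δ j))
      (∑ j, Real.exp (θ j + t * δ j) * δ j) t := HasDerivAt.fun_sum (fun j _ => hN j)
  have hpos := sumexp_pos hK (fun j => θ j + t * δ j)
  have hQ := (hN i).div hS hpos.ne'
  unfold softmax
  convert hQ using 1
  · rfl
  · rfl
  · rfl
  set S := ∑ a', Real.exp (θ a' + t * δ a') with hSdef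
  have h1 : ∑ j, Real.exp (θ j + t * δ j) / S * δ j
      = (∑ j, Real.exp (θ j + t * δ j) * δ j) / S := by
    rw [Finset.sum_div]; exact Finset.sum_congr rfl fun j _ => by ring
  rw [h1]
  field_simp

end Aux

section Aux2
variable {K : ℕ}

lemma hasDerivAt_expReward (hK : 0 < K) (r θ δ : Fin K → ℝ) (t : ℝ) :
    HasDerivAt (fun s => expReward r (fun j => θ j + s * δ j))
      (∑ i, pgrad r (fun j => θ j + t * δ j) i * δ i) t := by
  have h : HasDerivAt (fun s => ∑ i, softmax (fun j => θ j + s * δ j) i * r i)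
      (∑ i, softmax (fun j => θ j + t * δ j) i *
        (δ i - ∑ j, softmax (fun j' => θ j' + t * δ j') j * δ j) * r i) t :=
    HasDerivAt.fun_sum fun i _ => (hasDerivAt_softmax hK θ δ i t).mul_const (r i)
  have he : (fun s => expReward r (fun j => θ j + s * δ j))
      = fun s => ∑ i, softmax (fun j => θ j + s * δ j) i * r i := rfl
  rw [he]
  convert h using 1
  set L := fun j => θ j + t * δ j with hL
  set p := softmax L with hp
  have hF : expReward r L = ∑ i, p i * r i := rfl
  have e1 : ∑ i, pgrad r L i * δ i
      = (∑ i, p i * r i * δ i) - (∑ i, p i * δ i) * expReward r L := by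
    rw [Finset.sum_mul, ← Finset.sum_sub_distrib]
    refine Finset.sum_congr rfl fun i _ => ?_
    show pgrad r L i * δ i = p i * r i * δ i - p i * δ i * expReward r L
    unfold pgrad
    ring
  have e2 : ∑ i, p i * (δ i - ∑ j, p j * δ j) * r i
      = (∑ i, p i * r i * δ i) - (∑ i, p i * δ i) * expReward r L := by
    rw [hF, mul_comm, Finset.sum_mul, ← Finset.sum_sub_distrib]
    exact Finset.sum_congr rfl fun i _ => by ring
  rw [e1, e2]

lemma hasDerivAt_pgrad (hK : 0 < K) (r θ δ : Fin K → ℝ) (i : Fin K) (t : ℝ) :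
    HasDerivAt (fun s => pgrad r (fun j => θ j + s * δ j) i)
      (pgrad r (fun j => θ j + t * δ j) i *
          (δ i - ∑ j, softmax (fun j' => θ j' + t * δ j') j * δ j) -
        softmax (fun j => θ j + t * δ j) i *
          (∑ j, pgrad r (fun j' => θ j' + t * δ j') j * δ j)) t := by
  have h := (hasDerivAt_softmax hK θ δ i t).mul
    ((hasDerivAt_expReward hK r θ δ t).const_sub (r i))
  have he : (fun s => pgrad r (fun j => θ j + s * δ j) i)
      = fun s => softmax (fun j => θ j + s * δ j) i *
          (r i - expReward r (fun j => θ j + s * δ j)) := rfl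
  rw [he]
  convert h using 1
  · rfl
  · rfl
  · rfl
  unfold pgrad
  ring

end Aux2

section Vec
variable {K : ℕ}

noncomputable def vec (x : Fin K → ℝ) : EuclideanSpace ℝ (Fin K) :=
  (WithLp.equiv 2 (Fin K → ℝ)).symm x

lemma vec_norm (x : Fin K → ℝ) : ‖vec x‖ = Real.sqrt (∑ i, x i ^ 2) := by
  rw [EuclideanSpace.norm_eq]
  congr 1
  exact Finset.sum_congr rfl fun i _ => by
    rw [Real.norm_eq_abs, sq_abs]; rfl

lemma vec_sub (x y : Fin K → ℝ) : vec x - vec y = vec (fun i => x i - y i) := rfl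

lemma vec_norm_mono {x y : Fin K → ℝ} (h : ∀ i, x i ^ 2 ≤ y i ^ 2) :
    ‖vec x‖ ≤ ‖vec y‖ := by
  rw [vec_norm, vec_norm]
  exact Real.sqrt_le_sqrt (Finset.sum_le_sum fun i _ => h i)

lemma vec_norm_mul_const (x : Fin K → ℝ) (c : ℝ) :
    ‖vec (fun i => x i * c)‖ = ‖vec x‖ * |c| := by
  rw [vec_norm, vec_norm]
  have : ∑ i, (x i * c) ^ 2 = (∑ i, x i ^ 2) * c ^ 2 := by
    rw [Finset.sum_mul]; exact Finset.sum_congr rfl fun i _ => by ring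
  rw [this, Real.sqrt_mul (Finset.sum_nonneg fun i _ => sq_nonneg _), Real.sqrt_sq_eq_abs]

lemma abs_apply_le_vec_norm (x : Fin K → ℝ) (i : Fin K) : |x i| ≤ ‖vec x‖ := by
  rw [vec_norm, ← Real.sqrt_sq_eq_abs]
  exact Real.sqrt_le_sqrt (Finset.single_le_sum (fun j _ => sq_nonneg (x j)) (Finset.mem_univ i))

lemma cs_vec (x y : Fin K → ℝ) : |∑ i, x i * y i| ≤ ‖vec x‖ * ‖vec y‖ := by
  rw [vec_norm, vec_norm, ← Real.sqrt_mul (Finset.sum_nonneg fun i _ => sq_nonneg _),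
    ← Real.sqrt_sq_eq_abs]
  exact Real.sqrt_le_sqrt (Finset.sum_mul_sq_le_sq_mul_sq _ _ _)

lemma vec_softmax_norm_le_one (hK : 0 < K) (θ : Fin K → ℝ) :
    ‖vec (softmax θ)‖ ≤ 1 := by
  rw [vec_norm]
  rw [show (1:ℝ) = Real.sqrt 1 by simp]
  refine Real.sqrt_le_sqrt ?_
  calc ∑ i, softmax θ i ^ 2 ≤ (∑ i, softmax θ i) ^ 2 :=
        Finset.sum_sq_le_sq_sum_of_nonneg fun i _ => (softmax_pos hK θ i).le
    _ = 1 := by rw [softmax_sum_one hK θ]; norm_num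

end Vec

section Bounds
variable {K : ℕ}

lemma expReward_pos (hK : 0 < K) {r : Fin K → ℝ} (hr : ∀ a, 0 < r a ∧ r a ≤ 1)
    (θ : Fin K → ℝ) : 0 < expReward r θ := by
  haveI : Nonempty (Fin K) := Fin.pos_iff_nonempty.1 hK
  exact Finset.sum_pos (fun i _ => mul_pos (softmax_pos hK θ i) (hr i).1) Finset.univ_nonempty

lemma expReward_le_one (hK : 0 < K) {r : Fin K → ℝ} (hr : ∀ a, 0 < r a ∧ r a ≤ 1)
    (θ : Fin K → ℝ) : expReward r θ ≤ 1 := by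
  calc expReward r θ ≤ ∑ i, softmax θ i * 1 :=
        Finset.sum_le_sum fun i _ =>
          mul_le_mul_of_nonneg_left (hr i).2 (softmax_pos hK θ i).le
    _ = 1 := by simp [softmax_sum_one hK θ]

lemma abs_sub_expReward_le_one (hK : 0 < K) {r : Fin K → ℝ}
    (hr : ∀ a, 0 < r a ∧ r a ≤ 1) (θ : Fin K → ℝ) (i : Fin K) :
    |r i - expReward r θ| ≤ 1 := by
  rw [abs_le]
  constructor
  · have := expReward_le_one hK hr θ
    have := (hr i).1
    linarith
  · have := expReward_pos hK hr θ
    have := (hr i).2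
    linarith

lemma vec_pgrad_norm_le_one (hK : 0 < K) {r : Fin K → ℝ}
    (hr : ∀ a, 0 < r a ∧ r a ≤ 1) (θ : Fin K → ℝ) :
    ‖vec (pgrad r θ)‖ ≤ 1 := by
  refine le_trans (vec_norm_mono (x := pgrad r θ) (y := softmax θ) fun i => ?_)
    (vec_softmax_norm_le_one hK θ)
  unfold pgrad
  rw [mul_pow]
  have h1 : (r i - expReward r θ) ^ 2 ≤ 1 := by
    have h := abs_sub_expReward_le_one hK hr θ i
    have h2 := sq_abs (r i - expReward r θ)
    nlinarith [abs_nonneg (r i - expReward r θ)]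
  nlinarith [sq_nonneg (softmax θ i)]

lemma pgradNorm_eq_vec (r θ : Fin K → ℝ) : pgradNorm r θ = ‖vec (pgrad r θ)‖ :=
  (vec_norm _).symm

/-- Hessian-vector product norm bound: `‖H(θ)δ‖ ≤ 3‖∇f(θ)‖‖δ‖`. -/
lemma hvec_norm_le (hK : 0 < K) {r : Fin K → ℝ} (hr : ∀ a, 0 < r a ∧ r a ≤ 1)
    (θ δ : Fin K → ℝ) :
    ‖vec (fun i => pgrad r θ i * (δ i - ∑ j, softmax θ j * δ j) -
        softmax θ i * (∑ j, pgrad r θ j * δ j))‖ ≤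
      3 * ‖vec (pgrad r θ)‖ * ‖vec δ‖ := by
  set A := ∑ j, softmax θ j * δ j with hA
  set B := ∑ j, pgrad r θ j * δ j with hB
  have hAbs : |A| ≤ ‖vec δ‖ := by
    calc |A| ≤ ‖vec (softmax θ)‖ * ‖vec δ‖ := cs_vec _ _
      _ ≤ 1 * ‖vec δ‖ :=
        mul_le_mul_of_nonneg_right (vec_softmax_norm_le_one hK θ) (norm_nonneg _)
      _ = ‖vec δ‖ := one_mul _
  have hBabs : |B| ≤ ‖vec (pgrad r θ)‖ * ‖vec δ‖ := cs_vec _ _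
  have tri : ‖vec (fun i => pgrad r θ i * (δ i - A) - softmax θ i * B)‖ ≤
      ‖vec (fun i => pgrad r θ i * (δ i - A))‖ + ‖vec (fun i => softmax θ i * B)‖ := by
    rw [show (fun i => pgrad r θ i * (δ i - A) - softmax θ i * B)
        = fun i => (pgrad r θ i * (δ i - A)) - (softmax θ i * B) from rfl, ← vec_sub]
    exact norm_sub_le _ _
  have h1 : ‖vec (fun i => pgrad r θ i * (δ i - A))‖ ≤
      ‖vec (pgrad r θ)‖ * (2 * ‖vec δ‖) := by
    calc ‖vec (fun i => pgrad r θ i * (δ i - A))‖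
        ≤ ‖vec (fun i => pgrad r θ i * (2 * ‖vec δ‖))‖ := by
          refine vec_norm_mono fun i => ?_
          rw [mul_pow, mul_pow]
          refine mul_le_mul_of_nonneg_left ?_ (sq_nonneg _)
          have hδi : |δ i| ≤ ‖vec δ‖ := abs_apply_le_vec_norm δ i
          have : |δ i - A| ≤ 2 * ‖vec δ‖ := by
            calc |δ i - A| ≤ |δ i| + |A| := abs_sub _ _
              _ ≤ 2 * ‖vec δ‖ := by linarith
          calc (δ i - A)^2 = |δ i - A|^2 := (sq_abs _).symm
            _ ≤ (2 * ‖vec δ‖)^2 := pow_le_pow_left₀ (abs_nonneg _) this 2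
      _ = ‖vec (pgrad r θ)‖ * |2 * ‖vec δ‖| := vec_norm_mul_const _ _
      _ = ‖vec (pgrad r θ)‖ * (2 * ‖vec δ‖) := by
          rw [abs_of_nonneg (by positivity)]
  have h2 : ‖vec (fun i => softmax θ i * B)‖ ≤ ‖vec (pgrad r θ)‖ * ‖vec δ‖ := by
    calc ‖vec (fun i => softmax θ i * B)‖ = ‖vec (softmax θ)‖ * |B| :=
          vec_norm_mul_const _ _
      _ ≤ 1 * (‖vec (pgrad r θ)‖ * ‖vec δ‖) :=
          mul_le_mul (vec_softmax_norm_le_one hK θ) hBabs (abs_nonneg _) zero_le_one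
      _ = ‖vec (pgrad r θ)‖ * ‖vec δ‖ := one_mul _
  calc ‖vec (fun i => pgrad r θ i * (δ i - A) - softmax θ i * B)‖
      ≤ ‖vec (fun i => pgrad r θ i * (δ i - A))‖ + ‖vec (fun i => softmax θ i * B)‖ := tri
    _ ≤ ‖vec (pgrad r θ)‖ * (2 * ‖vec δ‖) + ‖vec (pgrad r θ)‖ * ‖vec δ‖ := add_le_add h1 h2
    _ = 3 * ‖vec (pgrad r θ)‖ * ‖vec δ‖ := by ring

end Bounds


/-- On-policy IS stochastic softmax policy gradient for sampled action `a`: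
`g_a(θ)(i) = 1{i = a}·r(a) − π_θ(i)·r(a)`. -/
noncomputable def stochPG {K : ℕ} (r : Fin K → ℝ) (a : Fin K) (θ : Fin K → ℝ)
    (i : Fin K) : ℝ :=
  (if i = a then r a else 0) - softmax θ i * r a

lemma sum_stochPG_sq_le_two {K : ℕ} (hK : 0 < K) {r : Fin K → ℝ}
    (hr : ∀ a, 0 < r a ∧ r a ≤ 1) (θ : Fin K → ℝ) (a : Fin K) :
    ∑ i, stochPG r a θ i ^ 2 ≤ 2 := by
  have key : ∀ i, stochPG r a θ i ^ 2 ≤ (if i = a then (1:ℝ) else 0) + softmax θ i := by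
    intro i
    have hp1 := softmax_pos hK θ i
    have hp2 := softmax_le_one hK θ i
    have hr1 := (hr a).1
    have hr2 := (hr a).2
    unfold stochPG
    by_cases hi : i = a
    · subst hi
      simp only [if_pos]
      have h3 : 0 ≤ (1 - softmax θ i) * r i := mul_nonneg (by linarith) hr1.le
      have h4 : (1 - softmax θ i) * r i ≤ 1 := by nlinarith
      nlinarith
    · simp only [if_neg hi]
      have h3 : softmax θ i * r a ≤ softmax θ i := by nlinarith
      have h4 : 0 ≤ softmax θ i * r a := mul_nonneg hp1.le hr1.le
      nlinarith
  calc ∑ i, stochPG r a θ i ^ 2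
      ≤ ∑ i, ((if i = a then (1:ℝ) else 0) + softmax θ i) :=
        Finset.sum_le_sum fun i _ => key i
    _ = 1 + 1 := by
        rw [Finset.sum_add_distrib, softmax_sum_one hK θ]
        simp
    _ = 2 := by norm_num

section Main
variable {K : ℕ}

noncomputable def hessVec (r θ δ : Fin K → ℝ) : Fin K → ℝ := fun i =>
  pgrad r θ i * (δ i - ∑ j, softmax θ j * δ j) -
    softmax θ i * (∑ j, pgrad r θ j * δ j)

lemma hessVec_norm_le (hK : 0 < K) {r : Fin K → ℝ} (hr : ∀ a, 0 < r a ∧ r a ≤ 1)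
    (θ δ : Fin K → ℝ) :
    ‖vec (hessVec r θ δ)‖ ≤ 3 * ‖vec (pgrad r θ)‖ * ‖vec δ‖ := by
  unfold hessVec
  exact hvec_norm_le hK hr θ δ

lemma hasDerivAt_vec_pgrad (hK : 0 < K) (r θ δ : Fin K → ℝ) (t : ℝ) :
    HasDerivAt (fun s => vec (pgrad r (fun j => θ j + s * δ j)))
      (vec (hessVec r (fun j => θ j + t * δ j) δ)) t := by
  have hpi : HasDerivAt (fun s => (fun i => pgrad r (fun j => θ j + s * δ j) i))
      (hessVec r (fun j => θ j + t * δ j) δ) t :=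
    hasDerivAt_pi.2 fun i => hasDerivAt_pgrad hK r θ δ i t
  exact ((PiLp.continuousLinearEquiv 2 ℝ
    (fun _ : Fin K => ℝ)).symm.toContinuousLinearMap.hasFDerivAt.comp_hasDerivAt t hpi)

end Main


/-- Non-uniform smoothness between two iterations of stochastic softmax PG: with
`η = (1/12)·‖d(π_θᵀ r)/dθ‖₂` and `θ' = θ + η·g_a(θ)`,
`|(π_{θ'} − π_θ)ᵀ r − ⟨d(π_θᵀ r)/dθ, θ' − θ⟩| ≤ 3·‖d(π_θᵀ r)/dθ‖₂·‖θ' − θ‖₂²`. -/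
theorem nonuniform_smoothness_between_iterations
    {K : ℕ} (hK : 2 ≤ K) (r : Fin K → ℝ)
    (hr : ∀ a, 0 < r a ∧ r a ≤ 1)
    (θ : Fin K → ℝ) (a : Fin K)
    (η : ℝ) (hη : η = (1 / 12) * pgradNorm r θ)
    (θ' : Fin K → ℝ) (hθ' : θ' = fun i => θ i + η * stochPG r a θ i) :
    |(expReward r θ' - expReward r θ) - ∑ i, pgrad r θ i * (θ' i - θ i)| ≤
      3 * pgradNorm r θ * ∑ i, (θ' i - θ i) ^ 2 := by
  have hK0 : 0 < K := by omega
  set δ : Fin K → ℝ := fun i => η * stochPG r a θ i with hδdef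
  have hδ : ∀ i, θ' i - θ i = δ i := fun i => by rw [hθ']; simp [hδdef]
  set G0 := pgradNorm r θ with hG0def
  have hG0v : G0 = ‖vec (pgrad r θ)‖ := pgradNorm_eq_vec r θ
  have hG0_nonneg : 0 ≤ G0 := by rw [hG0v]; exact norm_nonneg _
  have hG0_le : G0 ≤ 1 := by rw [hG0v]; exact vec_pgrad_norm_le_one hK0 hr θ
  set d := ‖vec δ‖ with hddef
  have hd_nonneg : 0 ≤ d := norm_nonneg _
  have hd2 : d ^ 2 = ∑ i, δ i ^ 2 := by
    rw [hddef, vec_norm, Real.sq_sqrt (Finset.sum_nonneg fun i _ => sq_nonneg _)]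
  have hsum2 : ∑ i, δ i ^ 2 ≤ (G0 / 8) ^ 2 := by
    have h2 := sum_stochPG_sq_le_two hK0 hr θ a
    have h0 : 0 ≤ ∑ i, stochPG r a θ i ^ 2 := Finset.sum_nonneg fun i _ => sq_nonneg _
    have e : ∑ i, δ i ^ 2 = η ^ 2 * ∑ i, stochPG r a θ i ^ 2 := by
      rw [Finset.mul_sum]
      exact Finset.sum_congr rfl fun i _ => by rw [hδdef]; ring
    rw [e, hη]
    nlinarith [sq_nonneg G0, mul_le_mul_of_nonneg_left h2 (sq_nonneg G0)]
  have hd_le : d ≤ G0 / 8 := by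
    rw [hddef, vec_norm]
    calc Real.sqrt (∑ i, δ i ^ 2) ≤ Real.sqrt ((G0 / 8) ^ 2) := Real.sqrt_le_sqrt hsum2
      _ = G0 / 8 := Real.sqrt_sq (by positivity)
  have hd18 : d ≤ 1 / 8 := by linarith
  have hL0 : (fun j => θ j + (0 : ℝ) * δ j) = θ := by funext j; ring
  have hL1 : (fun j => θ j + (1 : ℝ) * δ j) = θ' := by
    funext j; rw [hθ']; simp [hδdef]
  -- continuity and max of gradient norm along the segment
  have hGvcont : Continuous (fun s => vec (pgrad r (fun j => θ j + s * δ j))) :=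
    continuous_iff_continuousAt.2 fun t => (hasDerivAt_vec_pgrad hK0 r θ δ t).continuousAt
  obtain ⟨ts, hts, hmax⟩ := isCompact_Icc.exists_isMaxOn (Set.nonempty_Icc.2 zero_le_one)
    (hGvcont.norm.continuousOn (s := Set.Icc (0:ℝ) 1))
  set M := ‖vec (pgrad r (fun j => θ j + ts * δ j))‖ with hMdef
  have hM_nonneg : 0 ≤ M := norm_nonneg _
  have hgM : ∀ t ∈ Set.Icc (0:ℝ) 1, ‖vec (pgrad r (fun j => θ j + t * δ j))‖ ≤ M :=
    fun t ht => hmax ht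
  have hHb : ∀ t ∈ Set.Icc (0:ℝ) 1,
      ‖vec (hessVec r (fun j => θ j + t * δ j) δ)‖ ≤ 3 * M * d := by
    intro t ht
    refine le_trans (hessVec_norm_le hK0 hr (fun j => θ j + t * δ j) δ) ?_
    have h := hgM t ht
    nlinarith [norm_nonneg (vec (pgrad r (fun j => θ j + t * δ j)))]
  have MVT : ∀ x ∈ Set.Icc (0:ℝ) 1,
      ‖vec (pgrad r (fun j => θ j + x * δ j)) -
        vec (pgrad r (fun j => θ j + (0:ℝ) * δ j))‖ ≤ 3 * M * d * (x - 0) :=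
    norm_image_sub_le_of_norm_deriv_le_segment'
      (f' := fun t => vec (hessVec r (fun j => θ j + t * δ j) δ))
      (fun x _ => (hasDerivAt_vec_pgrad hK0 r θ δ x).hasDerivWithinAt)
      (fun x hx => hHb x (Set.Ico_subset_Icc_self hx))
  rw [hL0] at MVT
  have hM2 : M ≤ 2 * G0 := by
    have h1 := MVT ts hts
    have h2 : M ≤ ‖vec (pgrad r θ)‖ +
        ‖vec (pgrad r (fun j => θ j + ts * δ j)) - vec (pgrad r θ)‖ := by
      have e : vec (pgrad r (fun j => θ j + ts * δ j)) = vec (pgrad r θ) +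
          (vec (pgrad r (fun j => θ j + ts * δ j)) - vec (pgrad r θ)) := by abel
      rw [hMdef]
      nth_rewrite 1 [e]
      exact norm_add_le _ _
    rw [← hG0v] at h2
    have hMd : M * d ≤ M * (1/8) := mul_le_mul_of_nonneg_left hd18 hM_nonneg
    have hMd0 : 0 ≤ M * d := mul_nonneg hM_nonneg hd_nonneg
    have h3 : 3 * M * d * (ts - 0) ≤ (1/2) * M := by nlinarith [hts.1, hts.2]
    linarith
  -- the derivative of the value along the segment, and its deviation bound
  have hB : ∀ t : ℝ, HasDerivAt (fun s => expReward r (fun j => θ j + s * δ j))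
      (∑ i, pgrad r (fun j => θ j + t * δ j) i * δ i) t :=
    hasDerivAt_expReward hK0 r θ δ
  have hpc : ∀ i, Continuous (fun t => pgrad r (fun j => θ j + t * δ j) i) := fun i =>
    continuous_iff_continuousAt.2 fun t => (hasDerivAt_pgrad hK0 r θ δ i t).continuousAt
  have hBc : Continuous (fun t => ∑ i, pgrad r (fun j => θ j + t * δ j) i * δ i) :=
    continuous_finset_sum _ fun i _ => (hpc i).mul continuous_const
  set B0 := ∑ i, pgrad r θ i * δ i with hB0def
  have hBd : ∀ t ∈ Set.Icc (0:ℝ) 1,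
      |(∑ i, pgrad r (fun j => θ j + t * δ j) i * δ i) - B0| ≤ 6 * G0 * d ^ 2 * t := by
    intro t ht
    have e : (∑ i, pgrad r (fun j => θ j + t * δ j) i * δ i) - B0
        = ∑ i, (pgrad r (fun j => θ j + t * δ j) i - pgrad r θ i) * δ i := by
      rw [hB0def, ← Finset.sum_sub_distrib]
      exact Finset.sum_congr rfl fun i _ => by ring
    rw [e]
    calc |∑ i, (pgrad r (fun j => θ j + t * δ j) i - pgrad r θ i) * δ i|
        ≤ ‖vec (fun i => pgrad r (fun j => θ j + t * δ j) i - pgrad r θ i)‖ * d :=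
          cs_vec _ _
      _ = ‖vec (pgrad r (fun j => θ j + t * δ j)) - vec (pgrad r θ)‖ * d := by
          rw [vec_sub]
      _ ≤ (3 * M * d * (t - 0)) * d :=
          mul_le_mul_of_nonneg_right (MVT t ht) hd_nonneg
      _ ≤ 6 * G0 * d ^ 2 * t := by nlinarith [ht.1, ht.2, sq_nonneg d,
            mul_le_mul_of_nonneg_right hM2 (mul_nonneg (mul_nonneg
              (by norm_num : (0:ℝ) ≤ 3) (sq_nonneg d)) ht.1)]
  have hφ : ∀ t : ℝ, HasDerivAt
      (fun s => expReward r (fun j => θ j + s * δ j) - s * B0)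
      ((∑ i, pgrad r (fun j => θ j + t * δ j) i * δ i) - B0) t :=
    fun t => (hB t).sub (hasDerivAt_mul_const B0)
  have hInt : IntervalIntegrable
      (fun t => (∑ i, pgrad r (fun j => θ j + t * δ j) i * δ i) - B0)
      MeasureTheory.volume 0 1 :=
    (hBc.sub continuous_const).intervalIntegrable _ _
  have hFTC := intervalIntegral.integral_eq_sub_of_hasDerivAt
    (f := fun s => expReward r (fun j => θ j + s * δ j) - s * B0)
    (a := 0) (b := 1) (fun t _ => hφ t) hInt
  beta_reduce at hFTC
  rw [hL0, hL1] at hFTC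
  have hIb : |∫ t in (0:ℝ)..1,
      ((∑ i, pgrad r (fun j => θ j + t * δ j) i * δ i) - B0)| ≤ 3 * G0 * d ^ 2 := by
    have habs := intervalIntegral.abs_integral_le_integral_abs (μ := MeasureTheory.volume)
      (f := fun t => (∑ i, pgrad r (fun j => θ j + t * δ j) i * δ i) - B0)
      (zero_le_one)
    have hmono : (∫ t in (0:ℝ)..1,
        |(∑ i, pgrad r (fun j => θ j + t * δ j) i * δ i) - B0|)
        ≤ ∫ t in (0:ℝ)..1, 6 * G0 * d ^ 2 * t := by
      refine intervalIntegral.integral_mono_on zero_le_one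
        ((hBc.sub continuous_const).abs.intervalIntegrable _ _)
        ((continuous_const.mul continuous_id).intervalIntegrable _ _) ?_
      exact fun t ht => hBd t ht
    have hval : (∫ t in (0:ℝ)..1, 6 * G0 * d ^ 2 * t) = 3 * G0 * d ^ 2 := by
      rw [show (fun t : ℝ => 6 * G0 * d ^ 2 * t) = fun t : ℝ => (6 * G0 * d ^ 2) * t from rfl,
        intervalIntegral.integral_const_mul, integral_id]
      ring
    linarith
  -- final assembly
  have hsum_eq : ∑ i, pgrad r θ i * (θ' i - θ i) = B0 := by
    rw [hB0def]
    exact Finset.sum_congr rfl fun i _ => by rw [hδ i]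
  have hd2' : ∑ i, (θ' i - θ i) ^ 2 = d ^ 2 := by
    rw [hd2]
    exact Finset.sum_congr rfl fun i _ => by rw [hδ i]
  have hgoal : (expReward r θ' - expReward r θ) - ∑ i, pgrad r θ i * (θ' i - θ i)
      = ∫ t in (0:ℝ)..1,
        ((∑ i, pgrad r (fun j => θ j + t * δ j) i * δ i) - B0) := by
    rw [hFTC, hsum_eq]
    ring
  rw [hgoal, hd2']
  exact hIb
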